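/- arXiv:2307.03284 — 2 statements merged into one kernel-verified Lean document; each statement's English description precedes it below -/
import Mathlib

section
/- Let K = ℚ(α) where α is a root of the monic irreducible trinomial F(x) = x^9 + a·x + b ∈ ℤ[x]. If 2 does not divide b, then 2 does not divide the index (ℤ_K : ℤ[α]). -/
set_option synthInstance.maxHeartbeats 1000000
set_option maxHeartbeats 2000000

open Polynomial NumberField

/-- Cauchy-type helper: an abelian group of even finite cardinality has
an element of order two. -/
lemma cauchy_two_aux {G : Type*} [AddCommGroup G] (h2 : 2 ∣ Nat.card G)
    (h0 : Nat.card G ≠ 0) :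
    ∃ x : G, x ≠ 0 ∧ x + x = 0 := by
  have hfin : Finite G := Nat.finite_of_card_ne_zero h0
  cases nonempty_fintype G
  rw [Nat.card_eq_fintype_card] at h2
  haveI : Fact (Nat.Prime 2) := ⟨Nat.prime_two⟩
  obtain ⟨x, hx⟩ := exists_prime_addOrderOf_dvd_card 2 h2
  refine ⟨x, ?_, ?_⟩
  · intro h; rw [h, addOrderOf_zero] at hx; norm_num at hx
  · have h := addOrderOf_nsmul_eq_zero x
    rw [hx, two_nsmul] at h
    exact h

/-- The index `(ℤ_K : ℤ[θ])` of the subring `ℤ[θ]` in the ring of integers of `K`. -/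
noncomputable def subringIndex {K : Type*} [Field K] [NumberField K] (θ : 𝓞 K) : ℕ :=
  (Algebra.adjoin ℤ ({θ} : Set (𝓞 K))).toSubring.toAddSubgroup.index

/-- If `2` does not divide `b`, then `2` does not divide the index `(ℤ_K : ℤ[α])`. -/
theorem not_two_dvd_subringIndex_of_not_dvd
    (a b : ℤ) (hF : Irreducible (X ^ 9 + C a * X + C b))
    (K : Type*) [Field K] [NumberField K] (α : 𝓞 K)
    (hroot : aeval α (X ^ 9 + C a * X + C b) = 0)
    (hgen : Algebra.adjoin ℚ ({(α : K)} : Set K) = ⊤)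
    (hb : ¬ (2 : ℤ) ∣ b) :
    ¬ 2 ∣ subringIndex α := by
  intro h2idx
  set F : ℤ[X] := X ^ 9 + C a * X + C b with hFdef
  have hm : F.Monic := by
    rw [hFdef, add_assoc]
    exact monic_X_pow_add (lt_of_le_of_lt degree_linear_le (by norm_num))
  have hdeg : F.natDegree = 9 := by
    have h : (C a * X + C b : ℤ[X]).degree < (X ^ 9 : ℤ[X]).degree := by
      rw [degree_X_pow]; exact lt_of_le_of_lt degree_linear_le (by norm_num)
    have : F.degree = 9 := by
      rw [hFdef, add_assoc, degree_add_eq_left_of_degree_lt h, degree_X_pow]; rfl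
    exact natDegree_eq_of_degree_eq_some this
  set β : K := (α : K) with hβdef
  -- minimal polynomial of β is F over ℚ
  have hβroot : aeval β (F.map (algebraMap ℤ ℚ)) = 0 := by
    rw [aeval_map_algebraMap]
    have : aeval β F = (IsScalarTower.toAlgHom ℤ (𝓞 K) K) (aeval α F) := by
      rw [← Polynomial.aeval_algHom_apply]; rfl
    rw [this, hroot, map_zero]
  have hmin : minpoly ℚ β = F.map (algebraMap ℤ ℚ) :=
    (minpoly.eq_of_irreducible_of_monic
      ((hm.isPrimitive.irreducible_iff_irreducible_map_fraction_map (K := ℚ)).mp hF)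
      hβroot (hm.map _)).symm
  have hβint : IsIntegral ℤ β := α.isIntegral_coe
  have hβintQ : IsIntegral ℚ β := IsIntegral.of_finite ℚ β
  -- a power basis of K over ℚ generated by β
  let e : (Algebra.adjoin ℚ ({β} : Set K)) ≃ₐ[ℚ] K :=
    (Subalgebra.equivOfEq _ ⊤ hgen).trans Subalgebra.topEquiv
  let pb : PowerBasis ℚ K := (Algebra.adjoin.powerBasis hβintQ).map e
  have hpbgen : pb.gen = β := rfl
  have hdim : pb.dim = 9 := by
    have := pb.natDegree_minpoly
    rw [hpbgen, hmin, hm.natDegree_map, hdeg] at this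
    omega
  -- the element y = F'(α) and its norm d
  set y : 𝓞 K := 9 * α ^ 8 + algebraMap ℤ (𝓞 K) a with hydef
  set d : ℤ := Algebra.norm ℤ y with hddef
  -- the discriminant of the power basis equals d
  have hdisc : Algebra.discr ℚ pb.basis = (d : ℚ) := by
    have hder : derivative (minpoly ℚ β) = C (9:ℚ) * X ^ 8 + C (a:ℚ) := by
      rw [hmin, hFdef]
      simp only [Polynomial.map_add, Polynomial.map_mul, Polynomial.map_pow, map_X, map_C]
      simp [derivative_X_pow]
      rw [← C_1, ← C_add]; norm_num
    have hy : ((y : 𝓞 K) : K) = aeval β (derivative (minpoly ℚ β)) := by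
      rw [hder, hydef]
      push_cast
      simp only [map_add, map_mul, aeval_C, map_pow, aeval_X, map_ofNat, map_intCast,
        eq_intCast]
      rfl
    have hfr : Module.finrank ℚ K = 9 := by rw [pb.finrank, hdim]
    rw [Algebra.discr_powerBasis_eq_norm, hfr, hpbgen]
    rw [← hy, ← Algebra.coe_norm_int, ← hddef]
    norm_num
  -- d is nonzero
  have hd0 : d ≠ 0 := by
    intro h
    have := Algebra.discr_not_zero_of_basis ℚ pb.basis
    rw [hdisc, h] at this
    exact this (by norm_num)
  -- the key fact: d is odd
  have hroot' : α ^ 9 + algebraMap ℤ (𝓞 K) a * α + algebraMap ℤ (𝓞 K) b = 0 := by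
    have := hroot
    rw [hFdef] at this
    simpa only [map_add, map_mul, map_pow, aeval_X, aeval_C] using this
  have hdodd : ¬ (2 : ℤ) ∣ d := by
    intro h2
    have hcard : Nat.card ((𝓞 K) ⧸ Ideal.span {y}) = d.natAbs := by
      rw [hddef, ← Submodule.cardQuot_apply, ← Ideal.absNorm_apply, Ideal.absNorm_span_singleton]
    obtain ⟨t, ht0, ht2⟩ := cauchy_two_aux (G := (𝓞 K) ⧸ Ideal.span {y})
      (by rw [hcard]; exact Int.natAbs_dvd_natAbs.mpr h2)
      (by rw [hcard]; exact Int.natAbs_ne_zero.mpr hd0)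
    obtain ⟨x, rfl⟩ := Ideal.Quotient.mk_surjective t
    have hx2 : (2 : 𝓞 K) * x ∈ Ideal.span {y} := by
      rw [← Ideal.Quotient.eq_zero_iff_mem, two_mul, map_add]
      exact ht2
    have hxny : x ∉ Ideal.span {y} := fun h => ht0 (Ideal.Quotient.eq_zero_iff_mem.mpr h)
    have hJ : Ideal.span {y} ⊔ Ideal.span {(2 : 𝓞 K)} ≠ ⊤ := by
      intro htop
      have h1 : (1 : 𝓞 K) ∈ Ideal.span {y} ⊔ Ideal.span {(2 : 𝓞 K)} := htop ▸ Submodule.mem_top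
      obtain ⟨p, hp, q, hq, hpq⟩ := Submodule.mem_sup.mp h1
      obtain ⟨c, rfl⟩ := Ideal.mem_span_singleton.mp hq
      apply hxny
      have hxx : x = x * p + c * ((2 : 𝓞 K) * x) := by
        have h1' : x * (p + 2 * c) = x * 1 := by rw [hpq]
        calc x = x * (p + 2 * c) := by rw [h1', mul_one]
          _ = x * p + c * ((2 : 𝓞 K) * x) := by ring
      rw [hxx]
      exact Ideal.add_mem _ (Ideal.mul_mem_left _ _ hp) (Ideal.mul_mem_left _ _ hx2)
    obtain ⟨P, hPmax, hPle⟩ := Ideal.exists_le_maximal _ hJ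
    have hyP : y ∈ P := hPle (le_sup_left (α := Ideal (𝓞 K)) (Ideal.subset_span rfl))
    have h2P : (2 : 𝓞 K) ∈ P := hPle (le_sup_right (α := Ideal (𝓞 K)) (Ideal.subset_span rfl))
    have hkey : algebraMap ℤ (𝓞 K) (9 * b) ∈ P := by
      have heq : algebraMap ℤ (𝓞 K) (9 * b) =
          -(α * y) + (2 : 𝓞 K) * (-(4 * algebraMap ℤ (𝓞 K) a * α)) := by
        rw [hydef]
        simp only [map_mul, map_ofNat]
        linear_combination (9 : 𝓞 K) * hroot'
      rw [heq]
      exact Ideal.add_mem _ (neg_mem (Ideal.mul_mem_left _ _ hyP))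
        (Ideal.mul_mem_right _ _ h2P)
    have hoddb : Odd b := Int.not_even_iff_odd.mp (fun he => hb he.two_dvd)
    have hodd : Odd (9 * b) := (by decide : Odd (9:ℤ)).mul hoddb
    obtain ⟨k, hk⟩ := hodd
    have h2P' : algebraMap ℤ (𝓞 K) 2 ∈ P := by
      rw [map_ofNat]; exact h2P
    have h1P : (1 : 𝓞 K) ∈ P := by
      have : (1 : 𝓞 K) = algebraMap ℤ (𝓞 K) (9 * b) - algebraMap ℤ (𝓞 K) (2 * k) := by
        rw [← map_sub, hk, show (2 * k + 1) - 2 * k = 1 from by ring, map_one]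
      rw [this, map_mul (algebraMap ℤ (𝓞 K)) 2 k]
      exact Ideal.sub_mem _ hkey (Ideal.mul_mem_right _ _ h2P')
    exact hPmax.ne_top ((Ideal.eq_top_iff_one _).mpr h1P)
  -- the conductor-type property: d · 𝓞_K ⊆ ℤ[α]
  set A : Subalgebra ℤ (𝓞 K) := Algebra.adjoin ℤ ({α} : Set (𝓞 K)) with hAdef
  have hdx : ∀ x : 𝓞 K, ((d : ℤ) : 𝓞 K) * x ∈ A := by
    intro x
    have h := Algebra.discr_mul_isIntegral_mem_adjoin (R := ℤ) (K := ℚ) (L := K) (B := pb)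
      (hpbgen ▸ hβint) x.isIntegral_coe
    rw [hdisc, hpbgen, hβdef] at h
    have himg : Algebra.adjoin ℤ ({(α : K)} : Set K) =
        (Algebra.adjoin ℤ ({α} : Set (𝓞 K))).map (IsScalarTower.toAlgHom ℤ (𝓞 K) K) := by
      rw [AlgHom.map_adjoin, Set.image_singleton]; rfl
    rw [himg] at h
    have hcast : (d : ℚ) • ((x : 𝓞 K) : K) =
        (IsScalarTower.toAlgHom ℤ (𝓞 K) K) (((d : ℤ) : 𝓞 K) * x) := by
      rw [Algebra.smul_def, map_intCast]
      rfl
    rw [hcast] at h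
    obtain ⟨w, hw, hweq⟩ := Subalgebra.mem_map.mp h
    have : w = ((d : ℤ) : 𝓞 K) * x := RingOfIntegers.coe_injective hweq
    rwa [this] at hw
  -- finiteness of the quotient
  set H : AddSubgroup (𝓞 K) := A.toSubring.toAddSubgroup with hHdef
  have hmemH : ∀ z : 𝓞 K, z ∈ H ↔ z ∈ A := fun z => Iff.rfl
  haveI : AddGroup.FG (𝓞 K) := Module.Finite.iff_addGroup_fg.mp inferInstance
  haveI : AddGroup.FG ((𝓞 K) ⧸ H) :=
    AddGroup.fg_of_surjective (f := QuotientAddGroup.mk' H) (QuotientAddGroup.mk'_surjective H)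
  have htor : AddMonoid.IsTorsion ((𝓞 K) ⧸ H) := by
    intro q
    obtain ⟨x, rfl⟩ := QuotientAddGroup.mk'_surjective H q
    rw [isOfFinAddOrder_iff_nsmul_eq_zero]
    refine ⟨d.natAbs, Nat.pos_of_ne_zero (Int.natAbs_ne_zero.mpr hd0), ?_⟩
    rw [← map_nsmul, QuotientAddGroup.mk'_apply, QuotientAddGroup.eq_zero_iff, hmemH]
    have : (d.natAbs : ℕ) • x = ((d.natAbs : ℤ) : 𝓞 K) * x := by
      rw [nsmul_eq_mul, Int.cast_natCast]
    rw [this]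
    rcases Int.natAbs_eq d with h | h
    · rw [← h]; exact hdx x
    · have : ((d.natAbs : ℤ) : 𝓞 K) * x = -(((d : ℤ) : 𝓞 K) * x) := by
        rw [show ((d.natAbs : ℤ)) = -d from by omega]
        push_cast; ring
      rw [this]
      exact neg_mem (hdx x)
  haveI hfinQ : Finite ((𝓞 K) ⧸ H) := AddCommGroup.finite_of_fg_torsion _ htor
  have hindex : subringIndex α = Nat.card ((𝓞 K) ⧸ H) := rfl
  have hcard0 : Nat.card ((𝓞 K) ⧸ H) ≠ 0 := Nat.card_ne_zero.mpr ⟨⟨0⟩, hfinQ⟩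
  -- Cauchy: get an element of order 2 in the quotient
  obtain ⟨q, hq0, hq2⟩ := cauchy_two_aux (G := (𝓞 K) ⧸ H) (hindex ▸ h2idx) hcard0
  obtain ⟨x, rfl⟩ := QuotientAddGroup.mk'_surjective H q
  have hxH : x ∉ A := fun h => hq0 ((QuotientAddGroup.eq_zero_iff x).mpr ((hmemH x).mpr h))
  have h2x : (2 : 𝓞 K) * x ∈ A := by
    have hmk : (QuotientAddGroup.mk' H) ((2 : 𝓞 K) * x) = 0 := by
      rw [two_mul, map_add]; exact hq2
    rw [← hmemH, ← QuotientAddGroup.eq_zero_iff, ← QuotientAddGroup.mk'_apply]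
    exact hmk
  -- d odd gives the contradiction
  have hdodd' : Odd d := Int.not_even_iff_odd.mp (fun he => hdodd he.two_dvd)
  obtain ⟨k, hk⟩ := hdodd'
  have hdk : ((d : ℤ) : 𝓞 K) = 2 * ((k : ℤ) : 𝓞 K) + 1 := by
    rw [hk]; push_cast; ring
  have hxA : x ∈ A := by
    have hx : x = ((d : ℤ) : 𝓞 K) * x - ((k : ℤ) : 𝓞 K) * ((2 : 𝓞 K) * x) := by
      linear_combination (-x) * hdk
    have hkA : ((k : ℤ) : 𝓞 K) ∈ A := by
      have := A.algebraMap_mem k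
      rwa [eq_intCast (algebraMap ℤ (𝓞 K)) k] at this
    rw [hx]
    exact sub_mem (hdx x) (mul_mem hkA h2x)
  exact hxH hxA
end

section
/- Let K = ℚ(α) where α is a root of the monic irreducible trinomial F(x) = x^9 + a·x + b ∈ ℤ[x]. If 3 does not divide a, then 3 does not divide the index (ℤ_K : ℤ[α]). -/
open Polynomial NumberField

set_option maxHeartbeats 2000000 in
/-- If `3` does not divide `a`, then `3` does not divide the index `(ℤ_K : ℤ[α])`. -/
theorem not_three_dvd_subringIndex_of_not_dvd
    (a b : ℤ) (hF : Irreducible (X ^ 9 + C a * X + C b))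
    (K : Type*) [Field K] [NumberField K] (α : 𝓞 K)
    (hroot : aeval α (X ^ 9 + C a * X + C b) = 0)
    (hgen : Algebra.adjoin ℚ ({(α : K)} : Set K) = ⊤)
    (ha : ¬ (3 : ℤ) ∣ a) :
    ¬ 3 ∣ subringIndex α := by
  intro hdvd
  classical
  set F : ℤ[X] := X ^ 9 + C a * X + C b with hFdef
  have hFmonic : F.Monic := by
    simpa [hFdef, add_assoc] using monic_X_pow_add
      (lt_of_le_of_lt (degree_linear_le) (by norm_num) : ((C a * X + C b : ℤ[X])).degree < (9:ℕ))
  have hFdeg : F.natDegree = 9 := by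
    apply natDegree_eq_of_degree_eq_some
    rw [hFdef, add_assoc, degree_add_eq_left_of_degree_lt (by
      simpa using (lt_of_le_of_lt (degree_linear_le) (by norm_num) :
        ((C a * X + C b : ℤ[X])).degree < (9:ℕ))), degree_X_pow]
  have hint : IsIntegral ℚ (α : K) := IsIntegral.of_finite ℚ _
  have hrootK : aeval (α : K) F = 0 := by
    have := Polynomial.aeval_algebraMap_apply K α F
    rw [hroot, map_zero] at this
    simpa using this
  have hminQ : minpoly ℚ (α : K) = F.map (Int.castRingHom ℚ) := by
    refine (minpoly.eq_of_irreducible_of_monic ?_ ?_ ?_).symm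
    · exact (IsPrimitive.Int.irreducible_iff_irreducible_map_cast hFmonic.isPrimitive).mp hF
    · rw [show (Int.castRingHom ℚ) = algebraMap ℤ ℚ from rfl, aeval_map_algebraMap]
      exact hrootK
    · exact hFmonic.map _
  have hndQ : (minpoly ℚ (α : K)).natDegree = 9 := by
    rw [hminQ, hFmonic.natDegree_map]
    exact hFdeg
  let pb : PowerBasis ℚ K := (Algebra.adjoin.powerBasis hint).map
    ((Subalgebra.equivOfEq _ _ hgen).trans Subalgebra.topEquiv)
  have hdim : pb.dim = 9 := hndQ
  have hpbgen : pb.gen = (α : K) := rfl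
  let B : Module.Basis (Fin 9) ℚ K := pb.basis.reindex (finCongr hdim)
  have hB : ∀ i : Fin 9, B i = (α : K) ^ (i : ℕ) := by
    intro i
    rw [Module.Basis.reindex_apply, PowerBasis.coe_basis, hpbgen]
    congr 1
  have hrel : ((α : K)) ^ 9 = (-(a:ℚ)) • ((α:K)) + (-(b:ℚ)) • (1:K) := by
    have h0 : (algebraMap ℤ K) a = algebraMap ℚ K ((a:ℚ)) := by
      rw [IsScalarTower.algebraMap_apply ℤ ℚ K]; norm_num
    have h1 : (algebraMap ℤ K) b = algebraMap ℚ K ((b:ℚ)) := by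
      rw [IsScalarTower.algebraMap_apply ℤ ℚ K]; norm_num
    have h2 := hrootK
    simp only [hFdef, map_add, map_pow, aeval_X, aeval_C, map_mul, h0, h1] at h2
    rw [Algebra.smul_def, Algebra.smul_def, map_neg, map_neg]
    linear_combination h2
  have hpsv : ∀ (m : ℕ), m < 9 → ∀ i : Fin 9,
      B.repr ((α:K)^m) i = if (i : ℕ) = m then 1 else 0 := by
    intro m hm i
    have : (α:K)^m = B ⟨m, hm⟩ := (hB ⟨m, hm⟩).symm
    rw [this, B.repr_self, Finsupp.single_apply]
    simp [Fin.ext_iff, eq_comm]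
  have hbig : ∀ (m : ℕ), 9 ≤ m → m ≤ 16 → ∀ i : Fin 9,
      B.repr ((α:K)^m) i =
        -(a:ℚ) * (if (i:ℕ) = m - 8 then 1 else 0) +
        -(b:ℚ) * (if (i:ℕ) = m - 9 then 1 else 0) := by
    intro m h9 h16 i
    have hm : (α:K)^m = (-(a:ℚ)) • (α:K)^(m-8) + (-(b:ℚ)) • (α:K)^(m-9) := by
      have e2 : m - 9 + 9 = m := by omega
      have e3 : m - 9 + 1 = m - 8 := by omega
      calc (α:K)^m = (α:K)^(m-9) * (α:K)^9 := by rw [← pow_add, e2]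
        _ = _ := by
            rw [hrel, mul_add, mul_smul_comm, mul_smul_comm, mul_one, ← pow_succ, e3]
    rw [hm, map_add, map_smul, map_smul, Finsupp.add_apply, Finsupp.smul_apply,
      Finsupp.smul_apply, hpsv (m-8) (by omega) i, hpsv (m-9) (by omega) i,
      smul_eq_mul, smul_eq_mul]
  have htr : ∀ x : K, Algebra.trace ℚ K x = ∑ i : Fin 9, B.repr (x * B i) i := by
    intro x
    rw [Algebra.trace_eq_matrix_trace B x, Matrix.trace]
    congr 1
    ext i
    rw [Matrix.diag_apply, Algebra.leftMulMatrix_eq_repr_mul]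
  let t : ℕ → ℚ := fun k => Algebra.trace ℚ K ((α:K)^k)
  have ht_def : ∀ k, t k = Algebra.trace ℚ K ((α:K)^k) := fun _ => rfl
  have hTk : ∀ k : ℕ, t k = ∑ i : Fin 9, B.repr ((α:K)^(k + (i:ℕ))) i := by
    intro k
    rw [ht_def, htr]
    exact Finset.sum_congr rfl fun i _ => by rw [hB i, ← pow_add]
  have htlow : ∀ k : ℕ, 1 ≤ k → k ≤ 7 → t k = 0 := by
    intro k h1 h7
    rw [hTk]
    apply Finset.sum_eq_zero
    intro i _
    have hi : (i:ℕ) < 9 := i.isLt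
    rcases le_or_gt (k + (i:ℕ)) 8 with h | h
    · rw [hpsv _ (by omega) i, if_neg (by omega)]
    · rw [hbig _ (by omega) (by omega) i, if_neg (by omega), if_neg (by omega)]
      ring
  have ht0 : t 0 = 9 := by
    rw [hTk]
    have : ∀ i : Fin 9, B.repr ((α:K)^(0 + (i:ℕ))) i = 1 := by
      intro i
      rw [hpsv _ (by omega) i, if_pos (by omega)]
    rw [Finset.sum_congr rfl fun i _ => this i]
    simp
  have ht8 : t 8 = -8 * (a:ℚ) := by
    rw [hTk]
    have : ∀ i : Fin 9, B.repr ((α:K)^(8 + (i:ℕ))) i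
        = if (i:ℕ) = 0 then 0 else -(a:ℚ) := by
      intro i
      have hi : (i:ℕ) < 9 := i.isLt
      rcases Nat.eq_zero_or_pos (i:ℕ) with h0 | h0
      · rw [hpsv _ (by omega) i, if_neg (by omega), if_pos h0]
      · rw [hbig _ (by omega) (by omega) i, if_pos (by omega), if_neg (by omega),
          if_neg (by omega)]
        ring
    rw [Finset.sum_congr rfl fun i _ => this i]
    norm_num [Fin.sum_univ_succ]
  have hrec : ∀ k : ℕ, t (k + 9) = -(a:ℚ) * t (k+1) - (b:ℚ) * t k := by
    intro k
    have hm : (α:K)^(k+9) = (-(a:ℚ)) • (α:K)^(k+1) + (-(b:ℚ)) • (α:K)^k := by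
      rw [pow_add, hrel, mul_add, mul_smul_comm, mul_smul_comm, mul_one, ← pow_succ]
    rw [ht_def, ht_def, ht_def, hm, map_add, map_smul, map_smul, smul_eq_mul, smul_eq_mul]
    ring
  let tf : ℕ → ℤ := fun k =>
    if k = 0 then 9 else if k = 8 then -8*a else if k = 9 then -9*b
      else if k = 16 then 8*a^2 else 0
  have ht9 : t 9 = -9 * (b:ℚ) := by
    rw [show (9:ℕ) = 0 + 9 from rfl, hrec, ht0, htlow 1 (by norm_num) (by norm_num)]
    ring
  have ht16 : t 16 = 8 * (a:ℚ)^2 := by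
    rw [show (16:ℕ) = 7 + 9 from rfl, hrec, ht8, htlow 7 (by norm_num) (by norm_num)]
    ring
  have htmid : ∀ k, 10 ≤ k → k ≤ 15 → t k = 0 := by
    intro k h1 h2
    obtain ⟨j, rfl⟩ : ∃ j, k = j + 9 := ⟨k - 9, by omega⟩
    rw [hrec, htlow (j+1) (by omega) (by omega), htlow j (by omega) (by omega)]
    ring
  have htv : ∀ k : ℕ, k ≤ 16 → t k = ((tf k : ℤ) : ℚ) := by
    intro k hk
    have hlow' : ∀ k, 1 ≤ k → k ≤ 7 → t k = ((tf k : ℤ) : ℚ) := by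
      intro k h1 h2
      rw [htlow k h1 h2]
      have : tf k = 0 := by
        simp only [tf]
        rw [if_neg (by omega), if_neg (by omega), if_neg (by omega), if_neg (by omega)]
      rw [this]; norm_num
    have hmid' : ∀ k, 10 ≤ k → k ≤ 15 → t k = ((tf k : ℤ) : ℚ) := by
      intro k h1 h2
      rw [htmid k h1 h2]
      have : tf k = 0 := by
        simp only [tf]
        rw [if_neg (by omega), if_neg (by omega), if_neg (by omega), if_neg (by omega)]
      rw [this]; norm_num
    interval_cases k
    · rw [ht0]; simp [tf]
    · exact hlow' 1 (by norm_num) (by norm_num)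
    · exact hlow' 2 (by norm_num) (by norm_num)
    · exact hlow' 3 (by norm_num) (by norm_num)
    · exact hlow' 4 (by norm_num) (by norm_num)
    · exact hlow' 5 (by norm_num) (by norm_num)
    · exact hlow' 6 (by norm_num) (by norm_num)
    · exact hlow' 7 (by norm_num) (by norm_num)
    · rw [ht8]; simp [tf]
    · rw [ht9]; simp [tf]
    · exact hmid' 10 (by norm_num) (by norm_num)
    · exact hmid' 11 (by norm_num) (by norm_num)
    · exact hmid' 12 (by norm_num) (by norm_num)
    · exact hmid' 13 (by norm_num) (by norm_num)
    · exact hmid' 14 (by norm_num) (by norm_num)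
    · exact hmid' 15 (by norm_num) (by norm_num)
    · rw [ht16]; simp [tf]
  -- the saturation lemma
  have hsat : ∀ x : 𝓞 K, (3 : 𝓞 K) * x ∈ Algebra.adjoin ℤ ({α} : Set (𝓞 K)) →
      x ∈ Algebra.adjoin ℤ ({α} : Set (𝓞 K)) := by
    intro x hx
    rw [Algebra.adjoin_singleton_eq_range_aeval] at hx
    obtain ⟨g, hg⟩ := hx
    have hFdeg' : F.degree = 9 := by
      rw [hFdef, add_assoc, degree_add_eq_left_of_degree_lt (by
        simpa using (lt_of_le_of_lt (degree_linear_le) (by norm_num) :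
          ((C a * X + C b : ℤ[X])).degree < (9:ℕ))), degree_X_pow]
      rfl
    have hdr : (g %ₘ F).natDegree < 9 := by
      rcases eq_or_ne (g %ₘ F) 0 with h0 | h0
      · rw [h0]; norm_num
      · have h1 := degree_modByMonic_lt g hFmonic
        rw [hFdeg'] at h1
        exact (natDegree_lt_iff_degree_lt h0).mpr (by exact_mod_cast h1)
    have heval : aeval α (g %ₘ F) = 3 * x := by
      have hsplit := modByMonic_add_div g F
      have h2 : aeval α (g %ₘ F) + aeval α F * aeval α (g /ₘ F) = aeval α g := by
        rw [← map_mul, ← map_add, hsplit]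
      rw [hroot, zero_mul, add_zero] at h2
      rw [h2]
      exact hg
    set c : ℕ → ℤ := fun i => (g %ₘ F).coeff i with hc
    have h3x : (3 : 𝓞 K) * x = ∑ i : Fin 9, c (i : ℕ) • α ^ (i : ℕ) := by
      rw [← heval, aeval_eq_sum_range' hdr,
        ← Fin.sum_univ_eq_sum_range fun i => (g %ₘ F).coeff i • α ^ i]
    have hxK : (3 : K) * (x : K) = ∑ i : Fin 9, ((c (i:ℕ) : K)) * (α : K) ^ (i : ℕ) := by
      have h := congrArg (algebraMap (𝓞 K) K) h3x
      simp only [map_mul, map_sum, map_zsmul, map_pow, map_ofNat] at h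
      rw [h]
      exact Finset.sum_congr rfl fun i _ => by rw [zsmul_eq_mul]
    have hsj : ∀ j : Fin 9, ∃ sj : ℤ,
        (sj : ℚ) = Algebra.trace ℚ K ((α : K) ^ (j : ℕ) * (x : K)) := by
      intro j
      have hin : IsIntegral ℤ ((α : K) ^ (j : ℕ) * (x : K)) := by
        have : ((α ^ (j:ℕ) * x : 𝓞 K) : K) = (α : K) ^ (j : ℕ) * (x : K) := by push_cast; ring
        rw [← this]
        exact RingOfIntegers.isIntegral_coe _
      have := Algebra.isIntegral_trace (R := ℤ) (L := ℚ) (F := K) hin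
      obtain ⟨sj, hsj⟩ := IsIntegrallyClosed.isIntegral_iff.mp this
      exact ⟨sj, by exact_mod_cast hsj⟩
    choose s hs using hsj
    have hE : ∀ j : Fin 9, (3 : ℤ) * s j = ∑ i : Fin 9, c (i:ℕ) * tf ((i : ℕ) + (j : ℕ)) := by
      intro j
      have e1 : (α : K) ^ (j : ℕ) * ((3 : K) * (x : K))
          = ∑ i : Fin 9, (c i : ℚ) • (α : K) ^ ((i : ℕ) + (j : ℕ)) := by
        rw [hxK, Finset.mul_sum]
        refine Finset.sum_congr rfl fun i _ => ?_
        rw [Algebra.smul_def, map_intCast, pow_add]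
        ring
      have e2 : (3 : ℚ) * Algebra.trace ℚ K ((α : K) ^ (j : ℕ) * (x : K))
          = ∑ i : Fin 9, (c i : ℚ) * t ((i : ℕ) + (j : ℕ)) := by
        have e3 : (3:ℚ) • ((α : K) ^ (j : ℕ) * (x : K))
            = (α : K) ^ (j : ℕ) * ((3 : K) * (x : K)) := by
          rw [Algebra.smul_def, map_ofNat]
          ring
        have e5 : (3:ℚ) * Algebra.trace ℚ K ((α : K) ^ (j : ℕ) * (x : K))
            = Algebra.trace ℚ K ((3:ℚ) • ((α : K) ^ (j : ℕ) * (x : K))) := by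
          rw [map_smul, smul_eq_mul]
        rw [e5, e3, e1, map_sum]
        exact Finset.sum_congr rfl fun i _ => by rw [map_smul, smul_eq_mul, ht_def]
      have e4 : ((3 * s j : ℤ) : ℚ) = ((∑ i : Fin 9, c i * tf ((i:ℕ)+(j:ℕ)) : ℤ) : ℚ) := by
        push_cast
        rw [← hs j] at e2
        rw [e2]
        refine Finset.sum_congr rfl fun i _ => ?_
        rw [htv ((i:ℕ)+(j:ℕ)) (by have := i.isLt; have := j.isLt; omega)]
      exact_mod_cast e4
    have hEn : ∀ (j : ℕ) (hj : j < 9),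
        (3 : ℤ) * s ⟨j, hj⟩ = ∑ i ∈ Finset.range 9, c i * tf (i + j) := by
      intro j hj
      rw [hE ⟨j, hj⟩, ← Fin.sum_univ_eq_sum_range fun i => c i * tf (i + j)]
    have h3p : Prime (3 : ℤ) := Int.prime_three
    have hstep : ∀ z : ℤ, (3:ℤ) ∣ 8 * (a * z) → 3 ∣ z := by
      intro z h
      rcases h3p.dvd_mul.mp h with h | h
      · norm_num at h
      · rcases h3p.dvd_mul.mp h with h | h
        · exact absurd h ha
        · exact h
    obtain ⟨S0, E0⟩ : ∃ S, 3 * S = ∑ i ∈ Finset.range 9, c i * tf (i + 0) := ⟨_, hEn 0 (by norm_num)⟩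
    obtain ⟨S1, E1⟩ : ∃ S, 3 * S = ∑ i ∈ Finset.range 9, c i * tf (i + 1) := ⟨_, hEn 1 (by norm_num)⟩
    obtain ⟨S2, E2⟩ : ∃ S, 3 * S = ∑ i ∈ Finset.range 9, c i * tf (i + 2) := ⟨_, hEn 2 (by norm_num)⟩
    obtain ⟨S3, E3⟩ : ∃ S, 3 * S = ∑ i ∈ Finset.range 9, c i * tf (i + 3) := ⟨_, hEn 3 (by norm_num)⟩
    obtain ⟨S4, E4⟩ : ∃ S, 3 * S = ∑ i ∈ Finset.range 9, c i * tf (i + 4) := ⟨_, hEn 4 (by norm_num)⟩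
    obtain ⟨S5, E5⟩ : ∃ S, 3 * S = ∑ i ∈ Finset.range 9, c i * tf (i + 5) := ⟨_, hEn 5 (by norm_num)⟩
    obtain ⟨S6, E6⟩ : ∃ S, 3 * S = ∑ i ∈ Finset.range 9, c i * tf (i + 6) := ⟨_, hEn 6 (by norm_num)⟩
    obtain ⟨S7, E7⟩ : ∃ S, 3 * S = ∑ i ∈ Finset.range 9, c i * tf (i + 7) := ⟨_, hEn 7 (by norm_num)⟩
    obtain ⟨S8, E8⟩ : ∃ S, 3 * S = ∑ i ∈ Finset.range 9, c i * tf (i + 8) := ⟨_, hEn 8 (by norm_num)⟩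
    simp only [Finset.sum_range_succ, Finset.sum_range_zero, tf] at E0 E1 E2 E3 E4 E5 E6 E7 E8
    norm_num at E0 E1 E2 E3 E4 E5 E6 E7 E8
    have D8 : (3:ℤ) ∣ c 8 := hstep _ ⟨3 * c 0 - S0, by linear_combination E0⟩
    have D7 : (3:ℤ) ∣ c 7 := hstep _ ⟨-S1 - 3 * (b * c 8), by linear_combination E1⟩
    have D6 : (3:ℤ) ∣ c 6 := hstep _ ⟨-S2 - 3 * (b * c 7), by linear_combination E2⟩
    have D5 : (3:ℤ) ∣ c 5 := hstep _ ⟨-S3 - 3 * (b * c 6), by linear_combination E3⟩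
    have D4 : (3:ℤ) ∣ c 4 := hstep _ ⟨-S4 - 3 * (b * c 5), by linear_combination E4⟩
    have D3 : (3:ℤ) ∣ c 3 := hstep _ ⟨-S5 - 3 * (b * c 4), by linear_combination E5⟩
    have D2 : (3:ℤ) ∣ c 2 := hstep _ ⟨-S6 - 3 * (b * c 3), by linear_combination E6⟩
    have D1 : (3:ℤ) ∣ c 1 := hstep _ ⟨-S7 - 3 * (b * c 2), by linear_combination E7⟩
    have D0 : (3:ℤ) ∣ c 0 := by
      obtain ⟨k8, hk8⟩ := D8
      refine hstep _ ⟨-S8 - 3 * (b * c 1) + 8 * (a^2 * k8), ?_⟩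
      linear_combination E8 + (8 * a^2) * hk8
    have hD : ∀ i : Fin 9, (3:ℤ) ∣ c (i:ℕ) := by
      intro i
      have hi := i.isLt
      interval_cases h : (i : ℕ)
      · exact D0
      · exact D1
      · exact D2
      · exact D3
      · exact D4
      · exact D5
      · exact D6
      · exact D7
      · exact D8
    choose d hd using hD
    have h3ne : (3 : 𝓞 K) ≠ 0 := by
      have : ((3:ℕ) : 𝓞 K) ≠ 0 := Nat.cast_ne_zero.mpr (by norm_num)
      exact_mod_cast this
    have hxy : (3 : 𝓞 K) * x = (3 : 𝓞 K) * ∑ i : Fin 9, d i • α ^ (i : ℕ) := by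
      rw [h3x, Finset.mul_sum]
      refine Finset.sum_congr rfl fun i _ => ?_
      calc c ↑i • α ^ (i:ℕ) = ((3:ℤ) * d i) • α ^ (i:ℕ) := by rw [hd i]
        _ = (3 : 𝓞 K) * (d i • α ^ (i:ℕ)) := by
            rw [mul_smul, zsmul_eq_mul]
            norm_num
    have hxval : x = ∑ i : Fin 9, d i • α ^ (i : ℕ) :=
      mul_left_cancel₀ h3ne hxy
    rw [hxval]
    refine Subalgebra.sum_mem _ fun i _ => ?_
    have hαmem : α ∈ Algebra.adjoin ℤ ({α} : Set (𝓞 K)) := Algebra.subset_adjoin rfl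
    exact Subalgebra.zsmul_mem _ (Subalgebra.pow_mem _ hαmem _) _
  -- ========== the index argument ==========
  set R : Subalgebra ℤ (𝓞 K) := Algebra.adjoin ℤ ({α} : Set (𝓞 K)) with hR
  set M : Submodule ℤ (𝓞 K) := Subalgebra.toSubmodule R with hM
  have hker : ∀ y : 𝓞 K, ∃ k : ℤ, k ≠ 0 ∧ k • y ∈ M := by
    intro y
    have hyK : (y : K) ∈ Algebra.adjoin ℚ ({(α : K)} : Set K) := by
      rw [hgen]; trivial
    rw [Algebra.adjoin_singleton_eq_range_aeval] at hyK
    obtain ⟨q, hq⟩ := hyK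
    obtain ⟨bd, hbd⟩ := IsLocalization.integerNormalization_map_to_map
      (nonZeroDivisors ℤ) q
    set p : ℤ[X] := IsLocalization.integerNormalization (nonZeroDivisors ℤ) q with hp
    refine ⟨(bd : ℤ), nonZeroDivisors.coe_ne_zero bd, ?_⟩
    have hKeq : (((bd : ℤ) • y : 𝓞 K) : K) = ((aeval α p : 𝓞 K) : K) := by
      have h1 : aeval (α : K) (p.map (algebraMap ℤ ℚ)) = aeval (α : K) p := by
        rw [aeval_map_algebraMap]
      have h2 : aeval (α : K) (p.map (algebraMap ℤ ℚ)) = (bd : ℤ) • ((y : K)) := by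
        rw [hbd, map_zsmul]
        exact congrArg _ hq
      have h3 : aeval (α : K) p = ((aeval α p : 𝓞 K) : K) := by
        rw [show ((α : 𝓞 K) : K) = algebraMap (𝓞 K) K α from rfl,
          Polynomial.aeval_algebraMap_apply]
      rw [← h3, ← h1, h2]
      push_cast
      ring
    have heq : ((bd : ℤ) • y : 𝓞 K) = aeval α p := by
      exact_mod_cast hKeq
    rw [heq]
    show aeval α p ∈ R
    rw [hR, Algebra.adjoin_singleton_eq_range_aeval]
    exact ⟨p, rfl⟩
  choose κ hκ0 hκm using hker
  obtain ⟨G, hG⟩ : ∃ G : Finset (𝓞 K), Submodule.span ℤ (G : Set (𝓞 K)) = ⊤ :=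
    Module.finite_def.mp (inferInstance : Module.Finite ℤ (𝓞 K))
  set d : ℤ := ∏ y ∈ G, κ y with hd
  have hd0 : d ≠ 0 := Finset.prod_ne_zero_iff.mpr fun y _ => hκ0 y
  have hdall : ∀ y : 𝓞 K, d • y ∈ M := by
    have hle : (⊤ : Submodule ℤ (𝓞 K)) ≤ M.comap (LinearMap.lsmul ℤ (𝓞 K) d) := by
      rw [← hG, Submodule.span_le]
      intro y hy
      simp only [SetLike.mem_coe, Submodule.mem_comap, LinearMap.lsmul_apply]
      rw [show d = (∏ z ∈ G.erase y, κ z) * κ y from (Finset.prod_erase_mul G κ hy).symm,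
        mul_smul]
      exact M.smul_mem _ (hκm y)
    intro y
    have := hle (Submodule.mem_top : y ∈ ⊤)
    simpa using this
  have hq3 : Module.IsTorsionBy ℤ (𝓞 K ⧸ M) d := by
    intro y
    obtain ⟨x, rfl⟩ := Submodule.Quotient.mk_surjective M y
    rw [← Submodule.Quotient.mk_smul]
    exact (Submodule.Quotient.mk_eq_zero M).mpr (hdall x)
  have hT : Module.IsTorsionBySet ℤ (𝓞 K ⧸ M) (Ideal.span {d}) :=
    (Module.isTorsionBySet_span_singleton_iff d).mpr hq3
  letI : Module (ℤ ⧸ Ideal.span ({d} : Set ℤ)) (𝓞 K ⧸ M) := hT.module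
  letI : IsScalarTower ℤ (ℤ ⧸ Ideal.span ({d} : Set ℤ)) (𝓞 K ⧸ M) :=
    hT.isScalarTower
  haveI : Module.Finite (ℤ ⧸ Ideal.span ({d} : Set ℤ)) (𝓞 K ⧸ M) :=
    Module.Finite.of_restrictScalars_finite ℤ _ _
  haveI : Finite (ℤ ⧸ Ideal.span ({d} : Set ℤ)) := by
    haveI : NeZero d.natAbs := ⟨Int.natAbs_ne_zero.mpr hd0⟩
    exact Finite.of_equiv _ (Int.quotientSpanEquivZMod d).symm.toEquiv
  haveI hfinQ : Finite (𝓞 K ⧸ M) := Module.finite_of_finite (ℤ ⧸ Ideal.span ({d} : Set ℤ))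
  have hidx : subringIndex α = Nat.card (𝓞 K ⧸ M) := rfl
  rw [hidx] at hdvd
  haveI := Fact.mk (by norm_num : Nat.Prime 3)
  letI : Fintype (𝓞 K ⧸ M) := Fintype.ofFinite _
  have hdvd' : 3 ∣ Fintype.card (𝓞 K ⧸ M) := by
    rwa [← Nat.card_eq_fintype_card]
  obtain ⟨y, hy⟩ := exists_prime_addOrderOf_dvd_card 3 hdvd'
  have hyne : y ≠ 0 := by
    intro h
    rw [h, addOrderOf_zero] at hy
    norm_num at hy
  have h3y : (3 : ℕ) • y = 0 := by
    rw [← hy]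
    exact addOrderOf_nsmul_eq_zero y
  obtain ⟨x, rfl⟩ := Submodule.Quotient.mk_surjective M y
  have hmem : (3 : 𝓞 K) * x ∈ R := by
    have h1 : Submodule.Quotient.mk (p := M) ((3 : ℕ) • x) = (0 : 𝓞 K ⧸ M) := by
      rw [← h3y]
      exact map_nsmul (M.mkQ) 3 x
    have h2 : ((3 : ℕ) • x) ∈ M := (Submodule.Quotient.mk_eq_zero M).mp h1
    have h3 : (3 : 𝓞 K) * x = (3 : ℕ) • x := by
      rw [nsmul_eq_mul]
      norm_num
    rw [h3]
    exact h2
  have hxR : x ∈ R := hsat x hmem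
  exact hyne ((Submodule.Quotient.mk_eq_zero M).mpr hxR)
end
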